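/- For a one-dimensional Gaussian density q(z|μ,σ²) = N(z; μ, σ²) and a twice continuously differentiable f with polynomially bounded derivatives, ∂/∂(σ²) E_{z∼q}[f(z)] = (1/2) E_{z∼q}[f''(z)]. -/

import Mathlib

open MeasureTheory

/-- One-dimensional Gaussian density `N(z; μ, v)` with variance `v`. -/
noncomputable def gauss1D (μ v z : ℝ) : ℝ :=
  (Real.sqrt (2 * Real.pi * v))⁻¹ * Real.exp (-(z - μ) ^ 2 / (2 * v))

/- ### integrability helpers -/

lemma poly_gauss_int0 {b : ℝ} (hb : 0 < b) (k : ℕ) :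
    Integrable (fun z : ℝ => (1 + |z|) ^ k * Real.exp (-b * z ^ 2)) := by
  have h1 : Integrable (fun z : ℝ => |z| ^ k * Real.exp (-b * z ^ 2)) := by
    have := (integrable_rpow_mul_exp_neg_mul_sq hb
      (s := (k : ℝ)) (lt_of_lt_of_le neg_one_lt_zero (Nat.cast_nonneg k))).abs
    apply this.congr
    refine Filter.Eventually.of_forall fun z => ?_
    show |z ^ (k:ℝ) * Real.exp (-b * z ^ 2)| = _
    rw [abs_mul, abs_of_nonneg (Real.exp_pos _).le, Real.rpow_natCast, abs_pow]
  have h2 : Integrable (fun z : ℝ => Real.exp (-b * z ^ 2)) := integrable_exp_neg_mul_sq hb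
  refine ((h2.add h1).const_mul ((2:ℝ)^k)).mono' ?_ ?_
  · exact (Continuous.mul (by continuity) (by continuity)).aestronglyMeasurable
  · refine Filter.Eventually.of_forall fun z => ?_
    have hz : (0:ℝ) ≤ (1 + |z|) ^ k * Real.exp (-b * z ^ 2) := by positivity
    rw [Real.norm_eq_abs, abs_of_nonneg hz]
    have : (1 + |z|) ^ k ≤ 2 ^ k * (1 + |z| ^ k) := by
      calc (1 + |z|) ^ k ≤ (2 * max 1 |z|) ^ k := by
            apply pow_le_pow_left₀ (by positivity)
            rcases le_total |z| 1 with h | h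
            · simp [max_eq_left h]; nlinarith
            · simp [max_eq_right h]; nlinarith
        _ = 2 ^ k * max 1 |z| ^ k := by rw [mul_pow]
        _ ≤ 2 ^ k * (1 + |z| ^ k) := by
            gcongr
            rcases le_total |z| 1 with h | h
            · simp [max_eq_left h]
            · rw [max_eq_right h]; nlinarith [pow_nonneg (abs_nonneg z) k]
    calc (1 + |z|) ^ k * Real.exp (-b * z ^ 2)
        ≤ 2 ^ k * (1 + |z| ^ k) * Real.exp (-b * z ^ 2) := by gcongr
      _ = 2 ^ k * (Real.exp (-b * z ^ 2) + |z| ^ k * Real.exp (-b * z ^ 2)) := by ring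

lemma poly_gauss_int {b : ℝ} (hb : 0 < b) (μ : ℝ) (k : ℕ) :
    Integrable (fun z : ℝ => (1 + |z|) ^ k * Real.exp (-b * (z - μ) ^ 2)) := by
  have h0 := poly_gauss_int0 hb k
  have h1 : Integrable (fun z : ℝ => (1 + |z - μ|) ^ k * Real.exp (-b * (z - μ) ^ 2)) :=
    h0.comp_sub_right μ
  refine (h1.const_mul ((1 + |μ|) ^ k)).mono' ?_ ?_
  · exact (Continuous.mul (by continuity) (by continuity)).aestronglyMeasurable
  · refine Filter.Eventually.of_forall fun z => ?_
    have hz : (0:ℝ) ≤ (1 + |z|) ^ k * Real.exp (-b * (z - μ) ^ 2) := by positivity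
    rw [Real.norm_eq_abs, abs_of_nonneg hz, ← mul_assoc, ← mul_pow]
    gcongr
    have := abs_sub_abs_le_abs_sub z μ
    have := abs_nonneg μ
    nlinarith [abs_nonneg (z - μ)]

lemma integrable_of_poly_gauss_bound {b : ℝ} (hb : 0 < b) (μ : ℝ) (k : ℕ) {g : ℝ → ℝ}
    (hg : AEStronglyMeasurable g volume) (D : ℝ)
    (h : ∀ z, |g z| ≤ D * ((1 + |z|) ^ k * Real.exp (-b * (z - μ) ^ 2))) :
    Integrable g := by
  refine ((poly_gauss_int hb μ k).const_mul D).mono' hg ?_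
  exact Filter.Eventually.of_forall fun z => by simpa using h z

/- ### pointwise bounds -/

lemma sq_shift_bound (μ z : ℝ) : (z - μ) ^ 2 ≤ (1 + |μ|) ^ 2 * (1 + |z|) ^ 2 := by
  have h1 : |z - μ| ≤ |z| + |μ| := by
    calc |z - μ| = |z + -μ| := by ring_nf
      _ ≤ |z| + |-μ| := abs_add_le _ _
      _ = |z| + |μ| := by rw [abs_neg]
  nlinarith [abs_nonneg z, abs_nonneg μ, sq_abs (z - μ), abs_nonneg (z - μ),
    mul_nonneg (abs_nonneg z) (abs_nonneg μ)]

lemma gauss1D_nonneg (μ v z : ℝ) : 0 ≤ gauss1D μ v z := by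
  unfold gauss1D; positivity

lemma gauss1D_continuous (μ v : ℝ) : Continuous (gauss1D μ v) := by
  unfold gauss1D
  exact continuous_const.mul
    ((((continuous_id.sub continuous_const).pow 2).neg.div_const _).rexp)

/- ### main integrability lemma -/

lemma key_int {v : ℝ} (hv : 0 < v) (μ : ℝ) {g r : ℝ → ℝ}
    (hgc : Continuous g) (hrc : Continuous r)
    (hbg : ∃ C k, ∀ z, |g z| ≤ C * (1 + |z|) ^ k)
    (hbr : ∃ C k, ∀ z, |r z| ≤ C * (1 + |z|) ^ k) :
    Integrable (fun z => g z * (gauss1D μ v z * r z)) := by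
  obtain ⟨C₁, k₁, h₁⟩ := hbg
  obtain ⟨C₂, k₂, h₂⟩ := hbr
  have hC₁ : 0 ≤ C₁ := le_trans (abs_nonneg _) (by simpa using h₁ 0)
  have hC₂ : 0 ≤ C₂ := le_trans (abs_nonneg _) (by simpa using h₂ 0)
  refine integrable_of_poly_gauss_bound (b := (2*v)⁻¹) (by positivity) μ (k₁ + k₂)
    ((hgc.mul ((gauss1D_continuous μ v).mul hrc)).aestronglyMeasurable)
    (C₁ * C₂ * (Real.sqrt (2 * Real.pi * v))⁻¹) (fun z => ?_)
  have hq : gauss1D μ v z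
      = (Real.sqrt (2 * Real.pi * v))⁻¹ * Real.exp (-(2*v)⁻¹ * (z - μ) ^ 2) := by
    unfold gauss1D
    rw [show -(z - μ) ^ 2 / (2 * v) = -(2*v)⁻¹ * (z - μ) ^ 2 from by ring]
  rw [abs_mul, abs_mul, abs_of_nonneg (gauss1D_nonneg _ _ _), hq, pow_add]
  calc |g z| * ((Real.sqrt (2 * Real.pi * v))⁻¹ * Real.exp (-(2*v)⁻¹ * (z - μ) ^ 2) * |r z|)
      ≤ (C₁ * (1 + |z|) ^ k₁) *
        ((Real.sqrt (2 * Real.pi * v))⁻¹ * Real.exp (-(2*v)⁻¹ * (z - μ) ^ 2) *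
          (C₂ * (1 + |z|) ^ k₂)) := by
        gcongr <;> first
          | positivity
          | exact abs_nonneg _
          | exact h₁ z
          | exact h₂ z
    _ = C₁ * C₂ * (Real.sqrt (2 * Real.pi * v))⁻¹ *
        ((1 + |z|) ^ k₁ * (1 + |z|) ^ k₂ * Real.exp (-(2*v)⁻¹ * (z - μ) ^ 2)) := by ring

lemma key_int' {v : ℝ} (hv : 0 < v) (μ : ℝ) {g : ℝ → ℝ}
    (hgc : Continuous g) (hbg : ∃ C k, ∀ z, |g z| ≤ C * (1 + |z|) ^ k) :
    Integrable (fun z => g z * gauss1D μ v z) := by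
  have := key_int hv μ hgc continuous_const hbg
    ⟨1, 0, fun z => by norm_num⟩ (r := fun _ => (1:ℝ))
  simpa using this
lemma hasDerivAt_gauss_z (μ v : ℝ) (hv : 0 < v) (z : ℝ) :
    HasDerivAt (fun z => gauss1D μ v z) (gauss1D μ v z * ((μ - z) / v)) z := by
  have h1 : HasDerivAt (fun z : ℝ => -(z - μ) ^ 2 / (2 * v)) ((μ - z) / v) z := by
    have := (((hasDerivAt_id z).sub_const μ).pow 2).neg.div_const (2 * v)
    refine this.congr_deriv ?_
    simp only [id]
    field_simp
    ring
  have h2 := h1.exp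
  have h3 := h2.const_mul (Real.sqrt (2 * Real.pi * v))⁻¹
  refine h3.congr_deriv ?_
  unfold gauss1D
  ring

lemma hasDerivAt_gaussd_z (μ v : ℝ) (hv : 0 < v) (z : ℝ) :
    HasDerivAt (fun z => gauss1D μ v z * ((μ - z) / v))
      (gauss1D μ v z * (((z - μ) ^ 2 - v) / v ^ 2)) z := by
  have h1 := hasDerivAt_gauss_z μ v hv z
  have h2 : HasDerivAt (fun z : ℝ => (μ - z) / v) (-1 / v) z := by
    have := ((hasDerivAt_id z).const_sub μ).div_const v
    exact this
  have := h1.mul h2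
  refine this.congr_deriv ?_
  field_simp
  ring

lemma hasDerivAt_gauss_s (μ z : ℝ) {s : ℝ} (hs : 0 < s) :
    HasDerivAt (fun s => gauss1D μ s z)
      (gauss1D μ s z * (((z - μ) ^ 2 - s) / (2 * s ^ 2))) s := by
  have h2πs : 0 < 2 * Real.pi * s := by positivity
  have hr : 0 < Real.sqrt (2 * Real.pi * s) := Real.sqrt_pos.mpr h2πs
  have hr2 : Real.sqrt (2 * Real.pi * s) ^ 2 = 2 * Real.pi * s :=
    Real.sq_sqrt h2πs.le
  -- derivative of s ↦ (sqrt (2π s))⁻¹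
  have hA : HasDerivAt (fun s : ℝ => (Real.sqrt (2 * Real.pi * s))⁻¹)
      (-(1 / (2 * Real.sqrt (2 * Real.pi * s)) * (2 * Real.pi)) /
        Real.sqrt (2 * Real.pi * s) ^ 2) s := by
    have hlin : HasDerivAt (fun s : ℝ => 2 * Real.pi * s) (2 * Real.pi) s := by
      simpa using (hasDerivAt_id s).const_mul (2 * Real.pi)
    exact ((Real.hasDerivAt_sqrt h2πs.ne').comp s hlin).inv hr.ne'
  -- derivative of s ↦ exp (-(z-μ)^2 / (2 s))
  have hB : HasDerivAt (fun s : ℝ => Real.exp (-(z - μ) ^ 2 / (2 * s)))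
      (Real.exp (-(z - μ) ^ 2 / (2 * s)) * (-(z - μ) ^ 2 * (-2 / (2 * s) ^ 2))) s := by
    have hlin : HasDerivAt (fun s : ℝ => 2 * s) 2 s := by
      simpa using (hasDerivAt_id s).const_mul (2 : ℝ)
    have hinv := hlin.inv (by positivity : (2 : ℝ) * s ≠ 0)
    have := (hinv.const_mul (-(z - μ) ^ 2)).exp
    refine (this.congr_deriv ?_).congr_of_eventuallyEq (Filter.Eventually.of_forall fun x => ?_)
    · simp only [Pi.inv_apply, div_eq_mul_inv]
    · simp only [Pi.inv_apply, div_eq_mul_inv]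
  have := hA.mul hB
  refine this.congr_deriv ?_
  unfold gauss1D
  have e1 : -(1 / (2 * Real.sqrt (2 * Real.pi * s)) * (2 * Real.pi)) /
      Real.sqrt (2 * Real.pi * s) ^ 2
      = (Real.sqrt (2 * Real.pi * s))⁻¹ * (-(1 / (2 * s))) := by
    rw [hr2]
    field_simp
  rw [e1]
  field_simp
  ring

lemma sq_sub_bound {μ v : ℝ} (z : ℝ) (hv : 0 ≤ v) :
    |(z - μ) ^ 2 - v| ≤ ((1 + |μ|) ^ 2 + v) * (1 + |z|) ^ 2 := by
  have hw := sq_shift_bound μ z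
  have h1 : (1:ℝ) ≤ (1 + |z|) ^ 2 := by nlinarith [abs_nonneg z]
  rw [abs_le]
  constructor <;> nlinarith [sq_nonneg (z - μ), abs_nonneg μ, abs_nonneg z, sq_nonneg (1 + |μ|)]

/-- Price's theorem in one dimension: for `f` twice continuously differentiable
with polynomially bounded `f, f', f''`,
`∂/∂(σ²) E_{z∼N(μ,σ²)}[f(z)] = (1/2) E_{z∼N(μ,σ²)}[f''(z)]`. -/
theorem price_theorem_1d (f : ℝ → ℝ) (hf : ContDiff ℝ 2 f)
    (hf0 : ∃ C k, ∀ z, |f z| ≤ C * (1 + |z|) ^ k)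
    (hf1 : ∃ C k, ∀ z, |deriv f z| ≤ C * (1 + |z|) ^ k)
    (hf2 : ∃ C k, ∀ z, |deriv (deriv f) z| ≤ C * (1 + |z|) ^ k)
    (μ : ℝ) :
    ∀ v : ℝ, 0 < v →
      HasDerivAt (fun s => ∫ z, f z * gauss1D μ s z)
        ((1 / 2) * ∫ z, deriv (deriv f) z * gauss1D μ v z) v := by
  intro v hv
  -- regularity of f
  have hf' : ContDiff ℝ 1 (deriv f) := by
    have h2 : ContDiff ℝ ((1 : ℕ) + 1) f := by exact_mod_cast hf
    exact (contDiff_succ_iff_deriv.mp h2).2.2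
  have hfc : Continuous f := hf.continuous
  have hf'c : Continuous (deriv f) := hf'.continuous
  have hf''c : Continuous (deriv (deriv f)) := by
    have h1 : ContDiff ℝ ((0 : ℕ) + 1) (deriv f) := by exact_mod_cast hf'
    exact ((contDiff_succ_iff_deriv.mp h1).2.2).continuous
  have hdf : ∀ x, HasDerivAt f (deriv f x) x := fun x =>
    ((hf.differentiable two_ne_zero) x).hasDerivAt
  have hdf' : ∀ x, HasDerivAt (deriv f) (deriv (deriv f) x) x := fun x =>
    ((hf'.differentiable one_ne_zero) x).hasDerivAt
  obtain ⟨C0, k0, hC0f⟩ := hf0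
  have hC0 : 0 ≤ C0 := le_trans (abs_nonneg _) (by simpa using hC0f 0)
  -- dominated differentiation under the integral sign
  have h_bound : ∀ (z : ℝ), ∀ s ∈ Metric.ball v (v/2),
      ‖f z * (gauss1D μ s z * (((z - μ) ^ 2 - s) / (2 * s ^ 2)))‖ ≤
        (C0 * (Real.sqrt (Real.pi * v))⁻¹ * (((1 + |μ|) ^ 2 + 3*v/2) * (2/v^2))) *
          ((1 + |z|) ^ (k0 + 2) * Real.exp (-(3*v)⁻¹ * (z - μ) ^ 2)) := by
    intro z s hs
    rw [Metric.mem_ball, Real.dist_eq] at hs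
    obtain ⟨hs1', hs2'⟩ := abs_lt.mp hs
    have hs1 : v/2 < s := by linarith
    have hs2 : s < 3*v/2 := by linarith
    have hsp : 0 < s := lt_trans (by positivity) hs1
    -- gaussian density bound
    have hq : gauss1D μ s z ≤
        (Real.sqrt (Real.pi * v))⁻¹ * Real.exp (-(3*v)⁻¹ * (z - μ) ^ 2) := by
      unfold gauss1D
      have h1 : (Real.sqrt (2 * Real.pi * s))⁻¹ ≤ (Real.sqrt (Real.pi * v))⁻¹ :=
        inv_anti₀ (Real.sqrt_pos.mpr (by positivity))
          (Real.sqrt_le_sqrt (by nlinarith [Real.pi_pos]))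
      have h2 : Real.exp (-(z - μ) ^ 2 / (2 * s)) ≤ Real.exp (-(3*v)⁻¹ * (z - μ) ^ 2) := by
        apply Real.exp_le_exp.mpr
        have h3 : (3*v)⁻¹ * (z - μ) ^ 2 ≤ (z - μ) ^ 2 / (2 * s) := by
          rw [inv_mul_eq_div]
          exact div_le_div_of_nonneg_left (sq_nonneg _) (by positivity) (by linarith)
        linarith [neg_le_neg h3, (neg_div (2*s) ((z-μ)^2)).symm]
      exact mul_le_mul h1 h2 (Real.exp_pos _).le (by positivity)
    -- rational factor bound
    have hR : |((z - μ) ^ 2 - s) / (2 * s ^ 2)| ≤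
        ((1 + |μ|) ^ 2 * (1 + |z|) ^ 2 + 3*v/2) * (2/v^2) := by
      have hw := sq_shift_bound μ z
      have habs : |(z - μ) ^ 2 - s| ≤ (z - μ) ^ 2 + 3*v/2 := by
        rw [abs_le]; constructor <;> nlinarith [sq_nonneg (z - μ)]
      rw [abs_div, abs_of_nonneg (by positivity : (0:ℝ) ≤ 2 * s ^ 2),
        div_le_iff₀ (by positivity)]
      have hX : (0:ℝ) ≤ (1 + |μ|) ^ 2 * (1 + |z|) ^ 2 + 3*v/2 := by positivity
      have h1X : (1:ℝ) ≤ 2/v^2 * (2 * s ^ 2) := by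
        rw [div_mul_eq_mul_div, le_div_iff₀ (by positivity)]
        nlinarith
      calc |(z - μ) ^ 2 - s| ≤ (z - μ) ^ 2 + 3*v/2 := habs
        _ ≤ (1 + |μ|) ^ 2 * (1 + |z|) ^ 2 + 3*v/2 := by linarith
        _ = ((1 + |μ|) ^ 2 * (1 + |z|) ^ 2 + 3*v/2) * 1 := (mul_one _).symm
        _ ≤ ((1 + |μ|) ^ 2 * (1 + |z|) ^ 2 + 3*v/2) * (2/v^2 * (2 * s ^ 2)) :=
            mul_le_mul_of_nonneg_left h1X hX
        _ = ((1 + |μ|) ^ 2 * (1 + |z|) ^ 2 + 3*v/2) * (2/v^2) * (2 * s ^ 2) := by ring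
    rw [Real.norm_eq_abs, abs_mul, abs_mul, abs_of_nonneg (gauss1D_nonneg _ _ _)]
    calc |f z| * (gauss1D μ s z * |((z - μ) ^ 2 - s) / (2 * s ^ 2)|)
        ≤ (C0 * (1 + |z|) ^ k0) *
          (((Real.sqrt (Real.pi * v))⁻¹ * Real.exp (-(3*v)⁻¹ * (z - μ) ^ 2)) *
            (((1 + |μ|) ^ 2 * (1 + |z|) ^ 2 + 3*v/2) * (2/v^2))) := by
          gcongr <;> first
            | positivity
            | exact abs_nonneg _
            | exact mul_nonneg (gauss1D_nonneg _ _ _) (abs_nonneg _)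
            | exact gauss1D_nonneg _ _ _
            | exact hC0f z
            | exact hq
            | exact hR
      _ ≤ (C0 * (1 + |z|) ^ k0) *
          (((Real.sqrt (Real.pi * v))⁻¹ * Real.exp (-(3*v)⁻¹ * (z - μ) ^ 2)) *
            ((((1 + |μ|) ^ 2 + 3*v/2) * (1 + |z|) ^ 2) * (2/v^2))) := by
          have h1 : (1:ℝ) ≤ (1 + |z|) ^ 2 := by nlinarith [abs_nonneg z]
          have hmid : (1 + |μ|) ^ 2 * (1 + |z|) ^ 2 + 3*v/2 ≤
              ((1 + |μ|) ^ 2 + 3*v/2) * (1 + |z|) ^ 2 := by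
            nlinarith [abs_nonneg μ, sq_nonneg (1 + |μ|)]
          have h4 := mul_le_mul_of_nonneg_right hmid (by positivity : (0:ℝ) ≤ 2/v^2)
          have h5 := mul_le_mul_of_nonneg_left h4
            (by positivity :
              (0:ℝ) ≤ (Real.sqrt (Real.pi * v))⁻¹ * Real.exp (-(3*v)⁻¹ * (z - μ) ^ 2))
          exact mul_le_mul_of_nonneg_left h5 (mul_nonneg hC0 (by positivity))
      _ = (C0 * (Real.sqrt (Real.pi * v))⁻¹ * (((1 + |μ|) ^ 2 + 3*v/2) * (2/v^2))) *
          ((1 + |z|) ^ (k0 + 2) * Real.exp (-(3*v)⁻¹ * (z - μ) ^ 2)) := by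
          rw [pow_add]; ring
  have main := hasDerivAt_integral_of_dominated_loc_of_deriv_le
    (F := fun s z => f z * gauss1D μ s z)
    (F' := fun s z => f z * (gauss1D μ s z * (((z - μ) ^ 2 - s) / (2 * s ^ 2))))
    (x₀ := v) (s := Metric.ball v (v/2))
    (bound := fun z => (C0 * (Real.sqrt (Real.pi * v))⁻¹ * (((1 + |μ|) ^ 2 + 3*v/2) * (2/v^2))) *
      ((1 + |z|) ^ (k0 + 2) * Real.exp (-(3*v)⁻¹ * (z - μ) ^ 2)))
    (Metric.ball_mem_nhds v (by positivity))
    (Filter.Eventually.of_forall fun s =>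
      (hfc.mul (gauss1D_continuous μ s)).aestronglyMeasurable)
    (key_int' hv μ hfc ⟨C0, k0, hC0f⟩)
    ((hfc.mul ((gauss1D_continuous μ v).mul (by fun_prop))).aestronglyMeasurable)
    (Filter.Eventually.of_forall h_bound)
    ((poly_gauss_int (by positivity) μ (k0 + 2)).const_mul _)
    (Filter.Eventually.of_forall fun z s hs => by
      have hsp : 0 < s := by
        rw [Metric.mem_ball, Real.dist_eq] at hs
        have := (abs_lt.mp hs).1
        linarith
      exact (hasDerivAt_gauss_s μ z hsp).const_mul (f z))
  -- identify the derivative with (1/2) ∫ f'' q via integration by parts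
  have hb_lin : ∃ C k, ∀ z : ℝ, |(μ - z)/v| ≤ C * (1 + |z|) ^ k := by
    refine ⟨(1 + |μ|)/v, 1, fun z => ?_⟩
    rw [abs_div, abs_of_pos hv, pow_one, div_mul_eq_mul_div]
    gcongr
    have h1 : |μ - z| ≤ |μ| + |z| := by
      calc |μ - z| = |μ + -z| := by ring_nf
        _ ≤ |μ| + |-z| := abs_add_le _ _
        _ = |μ| + |z| := by rw [abs_neg]
    nlinarith [abs_nonneg μ, abs_nonneg z]
  have hb_quad : ∃ C k, ∀ z : ℝ, |((z - μ) ^ 2 - v)/v^2| ≤ C * (1 + |z|) ^ k := by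
    refine ⟨((1 + |μ|) ^ 2 + v)/v^2, 2, fun z => ?_⟩
    rw [abs_div, abs_of_pos (show (0:ℝ) < v^2 by positivity), div_mul_eq_mul_div]
    exact div_le_div_of_nonneg_right (sq_sub_bound (μ := μ) z hv.le) (by positivity)
  have J1 : Integrable (fun z => f z * (gauss1D μ v z * (((z - μ) ^ 2 - v)/v^2))) :=
    key_int hv μ hfc (by fun_prop) ⟨C0, k0, hC0f⟩ hb_quad
  have J2 : Integrable (fun z => deriv f z * (gauss1D μ v z * ((μ - z)/v))) :=
    key_int hv μ hf'c (by fun_prop) hf1 hb_lin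
  have J3 : Integrable (fun z => f z * (gauss1D μ v z * ((μ - z)/v))) :=
    key_int hv μ hfc (by fun_prop) ⟨C0, k0, hC0f⟩ hb_lin
  have J4 : Integrable (fun z => deriv (deriv f) z * gauss1D μ v z) :=
    key_int' hv μ hf''c hf2
  have J5 : Integrable (fun z => deriv f z * gauss1D μ v z) :=
    key_int' hv μ hf'c hf1
  have step1 : (∫ z, f z * (gauss1D μ v z * (((z - μ) ^ 2 - v)/v^2)))
      = -∫ z, deriv f z * (gauss1D μ v z * ((μ - z)/v)) :=
    integral_mul_deriv_eq_deriv_mul_of_integrable (fun x _ => hdf x)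
      (fun x _ => hasDerivAt_gaussd_z μ v hv x)
      (by simpa only [Pi.mul_def] using J1)
      (by simpa only [Pi.mul_def] using J2)
      (by simpa only [Pi.mul_def] using J3)
  have step2 : (∫ z, deriv f z * (gauss1D μ v z * ((μ - z)/v)))
      = -∫ z, deriv (deriv f) z * gauss1D μ v z :=
    integral_mul_deriv_eq_deriv_mul_of_integrable (fun x _ => hdf' x)
      (fun x _ => hasDerivAt_gauss_z μ v hv x)
      (by simpa only [Pi.mul_def] using J2)
      (by simpa only [Pi.mul_def] using J4)
      (by simpa only [Pi.mul_def] using J5)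
  refine main.2.congr_deriv ?_
  have e1 : (∫ z, f z * (gauss1D μ v z * (((z - μ) ^ 2 - v) / (2 * v ^ 2))))
      = (1/2) * ∫ z, f z * (gauss1D μ v z * (((z - μ) ^ 2 - v)/v^2)) := by
    rw [← integral_const_mul]
    exact integral_congr_ae (Filter.Eventually.of_forall fun z => by ring)
  rw [e1, step1, step2]
  ring
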